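/- arXiv:1202.4875 — 4 statements merged into one kernel-verified Lean document; each statement's English description precedes it below -/
import Mathlib

section
/- For f ∈ L^2 which is ℱ_0-measurable, with f_i = P_0(f∘θ^i), S_n(f) = ∑_{j=1}^n f∘θ^j, and S̄_n(f) = S_n(f) − E_0(S_n(f)), one has the identity S̄_n(f) = ∑_{i=0}^{n-1} ∑_{j=1}^{n-i} (f_i)∘θ^j, where the inner sums converge in L^2. -/
open MeasureTheory Filter Topology ENNReal

section Aux

private lemma condexp_comp_step {X : Type*} {m : MeasurableSpace X}
    [m0 : MeasurableSpace X] {μ : Measure X} [IsProbabilityMeasure μ]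
    {θ : X → X} (hθ : MeasurePreserving θ μ μ)
    (hm : m ≤ m0) {g : X → ℝ} (hg : Integrable g μ) :
    (fun x => (μ[g|m]) (θ x)) =ᵐ[μ] μ[fun x => g (θ x)|m.comap θ] := by
  have hθm : Measurable θ := hθ.measurable
  have hcomap : m.comap θ ≤ m0 :=
    le_trans (MeasurableSpace.comap_mono hm) hθm.comap_le
  have key : ∀ (h : X → ℝ), AEStronglyMeasurable h μ → ∀ t : Set X, MeasurableSet t →
      ∫ x in θ ⁻¹' t, h (θ x) ∂μ = ∫ x in t, h x ∂μ := by
    intro h hh t ht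
    have hmap : Measure.map θ (μ.restrict (θ ⁻¹' t)) = μ.restrict t := by
      rw [← Measure.restrict_map hθm ht, hθ.map_eq]
    have hh' : AEStronglyMeasurable h (Measure.map θ (μ.restrict (θ ⁻¹' t))) := by
      rw [hmap]; exact hh.restrict
    rw [← hmap, integral_map hθm.aemeasurable hh']
  have hgθ : Integrable (fun x => g (θ x)) μ := (hθ.integrable_comp hg.1).2 hg
  have hcond_int : Integrable (fun x => (μ[g|m]) (θ x)) μ := by
    have h1 : Integrable (μ[g|m]) μ := integrable_condExp
    exact (hθ.integrable_comp h1.1).2 h1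
  refine (ae_eq_condExp_of_forall_setIntegral_eq hcomap hgθ ?_ ?_ ?_).symm.symm
  · intro s _ _
    exact hcond_int.integrableOn
  · rintro s ⟨t, ht, rfl⟩ _
    have h1 : ∫ x in θ ⁻¹' t, (μ[g|m]) (θ x) ∂μ = ∫ x in t, (μ[g|m]) x ∂μ :=
      key _ (stronglyMeasurable_condExp.mono hm).aestronglyMeasurable _ (hm t ht)
    have h2 : ∫ x in θ ⁻¹' t, g (θ x) ∂μ = ∫ x in t, g x ∂μ :=
      key _ hg.1 _ (hm t ht)
    rw [h1, h2, setIntegral_condExp hm hg ht]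
  · refine StronglyMeasurable.aestronglyMeasurable ?_
    exact stronglyMeasurable_condExp.comp_measurable
      (Measurable.of_comap_le le_rfl)

private lemma condexp_comp_iterate {X : Type*}
    [m0 : MeasurableSpace X] {μ : Measure X} [IsProbabilityMeasure μ]
    {θ : X → X} (hθ : MeasurePreserving θ μ μ)
    (F : ℤ → MeasurableSpace X) (hFle : ∀ n, F n ≤ m0)
    (hFθ : ∀ n : ℤ, F (n + 1) = (F n).comap θ) :
    ∀ (j : ℕ) (k : ℤ) (g : X → ℝ), Integrable g μ →
      (fun x => (μ[g|F k]) (θ^[j] x)) =ᵐ[μ] μ[fun x => g (θ^[j] x)|F (k + j)] := by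
  intro j
  induction j with
  | zero =>
      intro k g hg
      simp
  | succ j ih =>
      intro k g hg
      have hstep : (fun x => (μ[g|F k]) (θ x)) =ᵐ[μ] μ[fun x => g (θ x)|F (k + 1)] := by
        rw [hFθ k]
        exact condexp_comp_step hθ (hFle k) hg
      have hgθ : Integrable (fun x => g (θ x)) μ := (hθ.integrable_comp hg.1).2 hg
      have hθj : MeasurePreserving (θ^[j]) μ μ := hθ.iterate j
      have hcomp : (fun x => (μ[g|F k]) (θ (θ^[j] x)))
          =ᵐ[μ] (fun x => (μ[fun y => g (θ y)|F (k + 1)]) (θ^[j] x)) := by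
        have := ae_eq_comp (g := fun x => (μ[g|F k]) (θ x))
          (g' := μ[fun y => g (θ y)|F (k + 1)]) hθj.measurable.aemeasurable
          (by rw [hθj.map_eq]; exact hstep)
        exact this
      have hih := ih (k + 1) (fun x => g (θ x)) hgθ
      have hfin : (fun x => (μ[g|F k]) (θ^[j + 1] x))
          =ᵐ[μ] μ[fun x => g (θ^[j] (θ x))|F (k + 1 + j)] := by
        simp only [Function.iterate_succ_apply']
        refine hcomp.trans ?_
        refine hih.trans ?_
        have : (fun x => g (θ (θ^[j] x))) = fun x => g (θ^[j] (θ x)) := by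
          funext x
          rw [← Function.iterate_succ_apply' θ j x, Function.iterate_succ_apply θ j x]
        rw [this]
      refine hfin.trans ?_
      have h1 : (fun x => g (θ^[j] (θ x))) = fun x => g (θ^[j + 1] x) := by
        funext x; rw [Function.iterate_succ_apply θ j x]
      have h2 : k + 1 + (j : ℤ) = k + ((j : ℕ) + 1 : ℕ) := by push_cast; ring
      rw [h1, h2]

end Aux

/-- Identity `S̄_n(f) = ∑_{i=0}^{n-1} ∑_{j=1}^{n-i} f_i ∘ θ^j`, where `f_i = P_0(f ∘ θ^i)`,
`S_n(f) = ∑_{j=1}^n f ∘ θ^j` and `S̄_n(f) = S_n(f) − E_0(S_n(f))`. -/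
theorem centered_partial_sum_decomposition
    {X : Type*} [m0 : MeasurableSpace X] (μ : Measure X) [IsProbabilityMeasure μ]
    (θ θi : X → X) (hθ : MeasurePreserving θ μ μ) (hθi : MeasurePreserving θi μ μ)
    (hinv1 : Function.LeftInverse θi θ) (hinv2 : Function.RightInverse θi θ)
    (F : ℤ → MeasurableSpace X) (hFle : ∀ n, F n ≤ m0) (hFmono : Monotone F)
    (hFθ : ∀ n : ℤ, F (n + 1) = (F n).comap θ)
    (f : X → ℝ) (hf : MemLp f 2 μ) (hfmeas : StronglyMeasurable[F 0] f) :
    ∀ n : ℕ, 1 ≤ n →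
      (fun x => (∑ j ∈ Finset.Icc 1 n, f (θ^[j] x)) -
          (μ[fun y => ∑ j ∈ Finset.Icc 1 n, f (θ^[j] y)|F 0]) x) =ᵐ[μ]
        fun x => ∑ i ∈ Finset.range n, ∑ j ∈ Finset.Icc 1 (n - i),
          (μ[fun y => f (θ^[i] y)|F 0] - μ[fun y => f (θ^[i] y)|F (-1)]) (θ^[j] x) := by
  intro n hn
  set G : ℕ → X → ℝ := fun k x => f (θ^[k] x) with hG
  have hGdef : ∀ i : ℕ, (fun y => f (θ^[i] y)) = G i := fun i => rfl
  have hint : Integrable f μ := hf.integrable one_le_two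
  have hGint : ∀ k, Integrable (G k) μ :=
    fun k => ((hθ.iterate k).integrable_comp hint.1).2 hint
  have hGcomp : ∀ i j : ℕ, (fun x => G i (θ^[j] x)) = G (i + j) := by
    intro i j; funext x
    simp only [hG, Function.iterate_add_apply]
  have hGmeas : ∀ k : ℕ, StronglyMeasurable[F (k : ℤ)] (G k) := by
    intro k
    induction k with
    | zero => exact hfmeas
    | succ k ihk =>
      have hFk : F ((k + 1 : ℕ) : ℤ) = (F (k : ℤ)).comap θ := by
        rw [show ((k + 1 : ℕ) : ℤ) = (k : ℤ) + 1 by push_cast; ring, hFθ]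
      rw [hFk]
      have hmeasθ : Measurable[(F (k : ℤ)).comap θ, F (k : ℤ)] θ :=
        Measurable.of_comap_le le_rfl
      have h2 := ihk.comp_measurable hmeasθ
      have h3 : G (k + 1) = (G k) ∘ θ := by
        funext x
        simp only [hG, Function.comp_apply, Function.iterate_succ_apply]
      rw [h3]
      exact h2
  have hDk : ∀ k : ℕ, μ[G k|F (k : ℤ)] = G k := fun k =>
    condExp_of_stronglyMeasurable (hFle _) (hGmeas k) (hGint k)
  have hB : ∀ (k : ℤ) (i j : ℕ),
      (fun x => (μ[G i|F k]) (θ^[j] x)) =ᵐ[μ] μ[G (i + j)|F (k + j)] := by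
    intro k i j
    have h := condexp_comp_iterate hθ F hFle hFθ j k (G i) (hGint i)
    rwa [hGcomp i j] at h
  have hBall : ∀ᵐ x ∂μ, ∀ i j : ℕ,
      (μ[G i|F 0]) (θ^[j] x) - (μ[G i|F (-1)]) (θ^[j] x)
        = (μ[G (i + j)|F (j : ℤ)]) x - (μ[G (i + j)|F ((j : ℤ) - 1)]) x := by
    rw [ae_all_iff]
    intro i
    rw [ae_all_iff]
    intro j
    have h0 := hB 0 i j
    have h1 := hB (-1) i j
    rw [zero_add] at h0
    rw [show (-1 : ℤ) + (j : ℤ) = (j : ℤ) - 1 by ring] at h1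
    filter_upwards [h0, h1] with x hx0 hx1
    rw [hx0, hx1]
  have hsum_fun : (fun y => ∑ j ∈ Finset.Icc 1 n, f (θ^[j] y))
      = ∑ j ∈ Finset.Icc 1 n, G j := by
    funext y
    simp only [hG, Finset.sum_apply]
  have hcs : μ[fun y => ∑ j ∈ Finset.Icc 1 n, f (θ^[j] y)|F 0]
      =ᵐ[μ] ∑ j ∈ Finset.Icc 1 n, μ[G j|F 0] := by
    rw [hsum_fun]
    exact condExp_finset_sum (fun j _ => hGint j) (F 0)
  have reindex : ∀ (h : ℕ → ℕ → ℝ),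
      (∑ i ∈ Finset.range n, ∑ j ∈ Finset.Icc 1 (n - i), h (i + j) j)
        = ∑ k ∈ Finset.Icc 1 n, ∑ j ∈ Finset.Icc 1 k, h k j := by
    intro h
    rw [Finset.sum_sigma', Finset.sum_sigma']
    refine Finset.sum_nbij' (i := fun p => ⟨p.1 + p.2, p.2⟩)
      (j := fun p => ⟨p.1 - p.2, p.2⟩) ?_ ?_ ?_ ?_ ?_
    · rintro ⟨a, b⟩ hp
      simp only [Finset.mem_sigma, Finset.mem_range, Finset.mem_Icc] at hp ⊢
      omega
    · rintro ⟨a, b⟩ hp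
      simp only [Finset.mem_sigma, Finset.mem_range, Finset.mem_Icc] at hp ⊢
      omega
    · rintro ⟨a, b⟩ hp
      simp only [Finset.mem_sigma, Finset.mem_range, Finset.mem_Icc] at hp
      dsimp only
      have hab : a + b - b = a := by omega
      rw [hab]
    · rintro ⟨a, b⟩ hp
      simp only [Finset.mem_sigma, Finset.mem_range, Finset.mem_Icc] at hp
      dsimp only
      have hab : a - b + b = a := by omega
      rw [hab]
    · rintro ⟨a, b⟩ _
      rfl
  have tele : ∀ (b : ℤ → ℝ) (k : ℕ),
      ∑ j ∈ Finset.Icc 1 k, (b (j : ℤ) - b ((j : ℤ) - 1)) = b (k : ℤ) - b 0 := by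
    intro b k
    have h1 : ∑ j ∈ Finset.Icc 1 k, (b (j : ℤ) - b ((j : ℤ) - 1))
        = ∑ i ∈ Finset.range k, (b ((i + 1 : ℕ) : ℤ) - b ((i : ℕ) : ℤ)) := by
      refine Finset.sum_nbij' (i := fun a => a - 1) (j := fun a => a + 1) ?_ ?_ ?_ ?_ ?_
      · intro a ha
        simp only [Finset.mem_Icc] at ha
        simp only [Finset.mem_range]
        omega
      · intro a ha
        simp only [Finset.mem_range] at ha
        simp only [Finset.mem_Icc]
        omega
      · intro a ha
        simp only [Finset.mem_Icc] at ha
        omega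
      · intro a _
        omega
      · intro a ha
        simp only [Finset.mem_Icc] at ha
        have e1 : ((a - 1 + 1 : ℕ) : ℤ) = ((a : ℕ) : ℤ) := by
          have : a - 1 + 1 = a := by omega
          rw [this]
        have e2 : ((a - 1 : ℕ) : ℤ) = ((a : ℕ) : ℤ) - 1 := by
          omega
        rw [e1, e2]
    rw [h1, Finset.sum_range_sub (f := fun i : ℕ => b (i : ℤ))]
    norm_num
  simp only [hGdef]
  filter_upwards [hcs, hBall] with x hx1 hx2
  have hL : (∑ j ∈ Finset.Icc 1 n, f (θ^[j] x))
      - (μ[fun y => ∑ j ∈ Finset.Icc 1 n, f (θ^[j] y)|F 0]) x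
      = ∑ k ∈ Finset.Icc 1 n, (G k x - (μ[G k|F 0]) x) := by
    rw [hx1, Finset.sum_apply, Finset.sum_sub_distrib]
  rw [hL]
  have hR : ∑ i ∈ Finset.range n, ∑ j ∈ Finset.Icc 1 (n - i),
        (μ[G i|F 0] - μ[G i|F (-1)]) (θ^[j] x)
      = ∑ i ∈ Finset.range n, ∑ j ∈ Finset.Icc 1 (n - i),
        ((μ[G (i + j)|F (j : ℤ)]) x - (μ[G (i + j)|F ((j : ℤ) - 1)]) x) := by
    refine Finset.sum_congr rfl fun i _ => Finset.sum_congr rfl fun j _ => ?_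
    rw [Pi.sub_apply, hx2 i j]
  rw [hR, reindex (fun k j => (μ[G k|F (j : ℤ)]) x - (μ[G k|F ((j : ℤ) - 1)]) x)]
  refine Finset.sum_congr rfl fun k _ => ?_
  rw [tele (fun z => (μ[G k|F z]) x) k, hDk k]
end

section
/- Under the Hannan condition on an ℱ_0-measurable f ∈ L^2, the limit σ^2 = lim_n E(S̄_n^2)/n exists, and equals ‖m‖_2^2 where m = ∑_{k≥0} P_0(f∘θ^k). -/
open MeasureTheory Filter Topology ENNReal

section Aux

variable {X : Type*}

private lemma ae_sum_congr [m0 : MeasurableSpace X] {μ : Measure X} {ι : Type*} (s : Finset ι) {f g : ι → X → ℝ}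
    (h : ∀ i ∈ s, f i =ᵐ[μ] g i) :
    (fun x => ∑ i ∈ s, f i x) =ᵐ[μ] fun x => ∑ i ∈ s, g i x := by
  have H : ∀ᵐ x ∂μ, ∀ i ∈ (s : Set ι), f i x = g i x :=
    (ae_ball_iff s.countable_toSet).2 fun i hi => h i (Finset.mem_coe.mp hi)
  filter_upwards [H] with x hx
  exact Finset.sum_congr rfl fun i hi => hx i (Finset.mem_coe.mpr hi)

private lemma memℒp_two_condexp {mm m0 : MeasurableSpace X} {μ : Measure X}
    [IsProbabilityMeasure μ]
    (hle : mm ≤ m0) {g : X → ℝ} (hg : MemLp g 2 μ) : MemLp (μ[g|mm]) 2 μ := by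
  have h : (↑↑(condExpL2 ℝ ℝ hle (hg.toLp g)) : X → ℝ) =ᵐ[μ] μ[g|mm] := by
    refine ae_eq_condExp_of_forall_setIntegral_eq hle (hg.integrable one_le_two)
      (fun s hs hμs => integrableOn_condExpL2_of_measure_ne_top hle hμs.ne _)
      (fun s hs hμs => ?_) (aestronglyMeasurable_condExpL2 hle _)
    rw [integral_condExpL2_eq hle (hg.toLp g) hs hμs.ne]
    exact integral_congr_ae (ae_restrict_of_ae hg.coeFn_toLp)
  exact (Lp.memLp _).ae_eq h

private lemma integrable_mul2 [m0 : MeasurableSpace X] {μ : Measure X} {g h : X → ℝ} (hg : MemLp g 2 μ) (hh : MemLp h 2 μ) :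
    Integrable (fun x => g x * h x) μ := by
  have hpqr : (1 : ℝ≥0∞) / 1 = 1 / 2 + 1 / 2 := by
    rw [ENNReal.add_halves, one_div_one]
  haveI : ENNReal.HolderTriple 2 2 1 := ⟨by rw [inv_one, ENNReal.inv_two_add_inv_two]⟩
  have h2 := hh.smul (φ := g) (r := 1) hg
  have h3 := memLp_one_iff_integrable.mp h2
  exact h3

private lemma condexp_comp_mp {mm m0 : MeasurableSpace X} {μ : Measure X}
    [IsProbabilityMeasure μ]
    {φ : X → X} (hφ : MeasurePreserving φ μ μ) (hemb : MeasurableEmbedding φ)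
    (hle : mm ≤ m0) {g : X → ℝ} (hg : Integrable g μ) :
    (fun x => (μ[g|mm]) (φ x)) =ᵐ[μ] μ[fun x => g (φ x)|mm.comap φ] := by
  have hle' : mm.comap φ ≤ m0 :=
    (MeasurableSpace.comap_mono hle).trans hφ.measurable.comap_le
  have hgφ : Integrable (fun x => g (φ x)) μ := by
    have := (memLp_one_iff_integrable.mpr hg).comp_measurePreserving hφ
    simpa [Function.comp_def] using memLp_one_iff_integrable.mp this
  have hcint : Integrable (fun x => (μ[g|mm]) (φ x)) μ := by
    have := (memLp_one_iff_integrable.mpr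
      (integrable_condExp (f := g) (m := mm))).comp_measurePreserving hφ
    simpa [Function.comp_def] using memLp_one_iff_integrable.mp this
  refine ae_eq_condExp_of_forall_setIntegral_eq hle' hgφ
    (fun s _ _ => hcint.integrableOn) ?_ ?_
  · rintro s ⟨t, ht, rfl⟩ -
    calc ∫ x in φ ⁻¹' t, (μ[g|mm]) (φ x) ∂μ
        = ∫ y in t, (μ[g|mm]) y ∂μ := hφ.setIntegral_preimage_emb hemb _ t
      _ = ∫ y in t, g y ∂μ := setIntegral_condExp hle hg ht
      _ = ∫ x in φ ⁻¹' t, g (φ x) ∂μ := (hφ.setIntegral_preimage_emb hemb _ t).symm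
  · exact ((stronglyMeasurable_condExp (m := mm)).comp_measurable
      (Measurable.of_comap_le le_rfl)).aestronglyMeasurable

private lemma integral_sq_eq [m0 : MeasurableSpace X] {μ : Measure X} {h : X → ℝ} (hh : MemLp h 2 μ) :
    ∫ x, h x ^ 2 ∂μ = ‖hh.toLp h‖ ^ 2 := by
  rw [← real_inner_self_eq_norm_sq, L2.inner_def]
  refine integral_congr_ae ?_
  filter_upwards [hh.coeFn_toLp] with x hx
  rw [hx, real_inner_self_eq_norm_sq, Real.norm_eq_abs, sq_abs]

end Aux

/-- Under the Hannan condition, `σ² = lim_n E(S̄_n²)/n` exists and equals `‖m‖₂²`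
where `m = ∑_{k≥0} P_0(f∘θ^k)`. -/
theorem limiting_variance
    {X : Type*} [m0 : MeasurableSpace X] (μ : Measure X) [IsProbabilityMeasure μ]
    (θ θi : X → X) (hθ : MeasurePreserving θ μ μ) (hθi : MeasurePreserving θi μ μ)
    (hinv1 : Function.LeftInverse θi θ) (hinv2 : Function.RightInverse θi θ)
    (herg : Ergodic θ μ)
    (F : ℤ → MeasurableSpace X) (hFle : ∀ n, F n ≤ m0) (hFmono : Monotone F)
    (hFθ : ∀ n : ℤ, F (n + 1) = (F n).comap θ)
    (f : X → ℝ) (hf : MemLp f 2 μ) (hfmeas : StronglyMeasurable[F 0] f)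
    (hHannan : ∑' i : ℕ, eLpNorm
      (μ[fun z => f (θ^[i] z)|F 0] - μ[fun z => f (θ^[i] z)|F (-1)]) 2 μ < ⊤)
    (m : X → ℝ) (hm : MemLp m 2 μ)
    (hmlim : Tendsto (fun K : ℕ => eLpNorm (fun x => m x -
        ∑ k ∈ Finset.range K, (μ[fun z => f (θ^[k] z)|F 0]
          - μ[fun z => f (θ^[k] z)|F (-1)]) x) 2 μ) atTop (𝓝 0)) :
    Tendsto (fun n : ℕ =>
        (∫ x, ((∑ j ∈ Finset.Icc 1 n, f (θ^[j] x)) -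
          (μ[fun z => ∑ j ∈ Finset.Icc 1 n, f (θ^[j] z)|F 0]) x) ^ 2 ∂μ) / (n : ℝ))
      atTop (𝓝 (∫ x, (m x) ^ 2 ∂μ)) := by
  classical
  -- iterates of θ are measure preserving measurable embeddings
  have hθj : ∀ j : ℕ, MeasurePreserving (θ^[j]) μ μ := hθ.iterate
  have hembj : ∀ j : ℕ, MeasurableEmbedding (θ^[j]) := fun j =>
    (⟨⟨θ^[j], θi^[j], hinv1.iterate j, hinv2.iterate j⟩,
        (hθj j).measurable, (hθi.iterate j).measurable⟩ : X ≃ᵐ X).measurableEmbedding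
  -- filtration as pullbacks
  have hFj : ∀ j : ℕ, F (j : ℤ) = (F 0).comap (θ^[j]) := by
    intro j
    induction j with
    | zero => simp [MeasurableSpace.comap_id]
    | succ j ih =>
      have hcast : ((j + 1 : ℕ) : ℤ) = (j : ℤ) + 1 := by push_cast; ring
      rw [hcast, hFθ, ih, MeasurableSpace.comap_comp, ← Function.iterate_succ]
  have hFj' : ∀ j : ℕ, F ((j : ℤ) - 1) = (F (-1)).comap (θ^[j]) := by
    intro j
    induction j with
    | zero => simp [MeasurableSpace.comap_id]
    | succ j ih =>
      have hcast : ((j + 1 : ℕ) : ℤ) - 1 = ((j : ℤ) - 1) + 1 := by push_cast; ring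
      rw [hcast, hFθ, ih, MeasurableSpace.comap_comp, ← Function.iterate_succ]
  -- basic integrability
  have hfθ : ∀ k : ℕ, MemLp (fun x => f (θ^[k] x)) 2 μ := fun k =>
    hf.comp_measurePreserving (hθj k)
  have hfθint : ∀ k : ℕ, Integrable (fun x => f (θ^[k] x)) μ := fun k =>
    (hfθ k).integrable one_le_two
  have hfmeasθ : ∀ k : ℕ, StronglyMeasurable[F (k : ℤ)] (fun x => f (θ^[k] x)) := by
    intro k
    rw [hFj k]
    exact hfmeas.comp_measurable (Measurable.of_comap_le le_rfl)
  -- conditional expectation commutes with composition by θ^[j]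
  have hcomp0 : ∀ j k : ℕ, (fun x => (μ[fun z => f (θ^[k] z)|F 0]) (θ^[j] x)) =ᵐ[μ]
      μ[fun x => f (θ^[k] (θ^[j] x))|F (j : ℤ)] := by
    intro j k
    rw [hFj j]
    exact condexp_comp_mp (hθj j) (hembj j) (hFle 0) (hfθint k)
  have hcomp1 : ∀ j k : ℕ, (fun x => (μ[fun z => f (θ^[k] z)|F (-1)]) (θ^[j] x)) =ᵐ[μ]
      μ[fun x => f (θ^[k] (θ^[j] x))|F ((j : ℤ) - 1)] := by
    intro j k
    rw [hFj' j]
    exact condexp_comp_mp (hθj j) (hembj j) (hFle (-1)) (hfθint k)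
  -- the martingale increments building blocks
  set gf : ℕ → X → ℝ := fun k =>
    μ[fun z => f (θ^[k] z)|F 0] - μ[fun z => f (θ^[k] z)|F (-1)] with hgf
  set Mf : ℕ → X → ℝ := fun K x => ∑ k ∈ Finset.range K, gf k x with hMf
  have hgfmem : ∀ k, MemLp (gf k) 2 μ := by
    intro k
    simp only [hgf]
    exact (memℒp_two_condexp (hFle 0) (hfθ k)).sub (memℒp_two_condexp (hFle (-1)) (hfθ k))
  have hMfmem : ∀ K, MemLp (Mf K) 2 μ := by
    intro K
    simp only [hMf]
    exact memLp_finsetSum _ fun k _ => hgfmem k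
  set aa : ℕ → ℝ := fun K => ∫ x, (Mf K x) ^ 2 ∂μ with haa
  -- THE KEY IDENTITY : E(S̄_n²) = ∑_{K<n} ‖M_{K+1}‖₂²
  have key : ∀ n : ℕ,
      (∫ x, ((∑ j ∈ Finset.Icc 1 n, f (θ^[j] x)) -
        (μ[fun z => ∑ j ∈ Finset.Icc 1 n, f (θ^[j] z)|F 0]) x) ^ 2 ∂μ)
        = ∑ K ∈ Finset.range n, aa (K + 1) := by
    intro n
    set S : X → ℝ := fun z => ∑ j ∈ Finset.Icc 1 n, f (θ^[j] z) with hS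
    have hSx : ∀ x, (∑ j ∈ Finset.Icc 1 n, f (θ^[j] x)) = S x := fun x => rfl
    have hSpi : S = ∑ i ∈ Finset.Icc 1 n, (fun z => f (θ^[i] z)) := by
      funext z
      rw [Finset.sum_apply]
    have hSmem : MemLp S 2 μ := by
      simp only [hS]
      exact memLp_finsetSum _ fun i _ => hfθ i
    have hSint : Integrable S μ := hSmem.integrable one_le_two
    set u : ℕ → X → ℝ := fun j => μ[S|F (j : ℤ)] with hu
    set D : ℕ → X → ℝ := fun j x => u (j + 1) x - u j x with hD
    have humem : ∀ j : ℕ, MemLp (u j) 2 μ := by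
      intro j
      simp only [hu]
      exact memℒp_two_condexp (hFle _) hSmem
    have hDmem : ∀ j : ℕ, MemLp (D j) 2 μ := by
      intro j
      simp only [hD]
      exact ((humem (j + 1)).sub (humem j)).ae_eq (by rfl)
    -- increments are pullbacks of partial sums of gf
    have hT : ∀ j : ℕ, j < n →
        D j =ᵐ[μ] fun x => ∑ k ∈ Finset.range (n - j), gf k (θ^[j + 1] x) := by
      intro j hj
      have hcast : ((j + 1 : ℕ) : ℤ) - 1 = (j : ℤ) := by push_cast; ring
      -- per-term identities
      have hTi : ∀ i ∈ Finset.Icc 1 n,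
          (fun x => (μ[fun z => f (θ^[i] z)|F ((j + 1 : ℕ) : ℤ)]) x
            - (μ[fun z => f (θ^[i] z)|F (j : ℤ)]) x) =ᵐ[μ]
          fun x => if i ≤ j then 0 else gf (i - (j + 1)) (θ^[j + 1] x) := by
        intro i _
        by_cases hij : i ≤ j
        · have e1 : μ[fun z => f (θ^[i] z)|F ((j + 1 : ℕ) : ℤ)] = fun z => f (θ^[i] z) :=
            condExp_of_stronglyMeasurable (hFle _)
              ((hfmeasθ i).mono (hFmono (by exact_mod_cast Nat.le_succ_of_le hij)))
              (hfθint i)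
          have e2 : μ[fun z => f (θ^[i] z)|F (j : ℤ)] = fun z => f (θ^[i] z) :=
            condExp_of_stronglyMeasurable (hFle _)
              ((hfmeasθ i).mono (hFmono (by exact_mod_cast hij))) (hfθint i)
          refine Filter.EventuallyEq.of_eq ?_
          funext x
          rw [e1, e2]
          simp [hij]
        · push_neg at hij
          set k := i - (j + 1) with hk
          have hik : k + (j + 1) = i := by omega
          have hfi : (fun z => f (θ^[i] z)) = fun z => f (θ^[k] (θ^[j + 1] z)) := by
            funext z
            rw [← hik, Function.iterate_add_apply]
          have key0 : μ[fun z => f (θ^[i] z)|F ((j + 1 : ℕ) : ℤ)] =ᵐ[μ]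
              fun x => (μ[fun z => f (θ^[k] z)|F 0]) (θ^[j + 1] x) := by
            rw [hfi]
            exact (hcomp0 (j + 1) k).symm
          have key1 : μ[fun z => f (θ^[i] z)|F (j : ℤ)] =ᵐ[μ]
              fun x => (μ[fun z => f (θ^[k] z)|F (-1)]) (θ^[j + 1] x) := by
            rw [hfi, ← hcast]
            exact (hcomp1 (j + 1) k).symm
          filter_upwards [key0, key1] with x hx0 hx1
          simp only [hx0, hx1, if_neg (not_le.mpr hij)]
          simp [hgf]
      -- sum over i
      have h1 : μ[S|F ((j + 1 : ℕ) : ℤ)] =ᵐ[μ]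
          ∑ i ∈ Finset.Icc 1 n, μ[fun z => f (θ^[i] z)|F ((j + 1 : ℕ) : ℤ)] := by
        rw [hSpi]
        exact condExp_finsetSum (fun i _ => hfθint i) _
      have h2 : μ[S|F (j : ℤ)] =ᵐ[μ]
          ∑ i ∈ Finset.Icc 1 n, μ[fun z => f (θ^[i] z)|F (j : ℤ)] := by
        rw [hSpi]
        exact condExp_finsetSum (fun i _ => hfθint i) _
      have hDT : D j =ᵐ[μ] fun x => ∑ i ∈ Finset.Icc 1 n,
          ((μ[fun z => f (θ^[i] z)|F ((j + 1 : ℕ) : ℤ)]) x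
            - (μ[fun z => f (θ^[i] z)|F (j : ℤ)]) x) := by
        filter_upwards [h1, h2] with x hx1 hx2
        simp only [hD, hu]
        rw [hx1, hx2, Finset.sum_apply, Finset.sum_apply, ← Finset.sum_sub_distrib]
      have hsum := ae_sum_congr (μ := μ) (Finset.Icc 1 n) hTi
      refine (hDT.trans hsum).trans (Filter.EventuallyEq.of_eq ?_)
      funext x
      have hstep1 : ∑ i ∈ Finset.Icc 1 n,
          (if i ≤ j then (0 : ℝ) else gf (i - (j + 1)) (θ^[j + 1] x))
          = ∑ i ∈ (Finset.Icc 1 n).filter (fun i => ¬ i ≤ j),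
              gf (i - (j + 1)) (θ^[j + 1] x) := by
        rw [Finset.sum_filter]
        exact Finset.sum_congr rfl fun i _ => by by_cases hc : i ≤ j <;> simp [hc]
      rw [hstep1]
      have hstep2 : (Finset.Icc 1 n).filter (fun i => ¬ i ≤ j) = Finset.Ico (j + 1) (n + 1) := by
        ext i
        simp only [Finset.mem_filter, Finset.mem_Icc, Finset.mem_Ico, not_le]
        omega
      rw [hstep2, Finset.sum_Ico_eq_sum_range]
      have hstep3 : n + 1 - (j + 1) = n - j := by omega
      rw [hstep3]
      refine Finset.sum_congr rfl fun t _ => ?_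
      congr 1
      omega
    -- telescoping
    have hSn : μ[S|F (n : ℤ)] = S := by
      refine condExp_of_stronglyMeasurable (hFle _) ?_ hSint
      simp only [hS]
      exact Finset.stronglyMeasurable_fun_sum _ fun i hi =>
        (hfmeasθ i).mono (hFmono (by exact_mod_cast (Finset.mem_Icc.mp hi).2))
    have htel : (fun x => S x - (μ[S|F 0]) x)
        = fun x => ∑ j ∈ Finset.range n, D j x := by
      funext x
      simp only [hD, hu]
      rw [Finset.sum_range_sub (f := fun j => (μ[S|F ((j : ℕ) : ℤ)]) x) n]
      norm_num [hSn]
    -- orthogonality of the increments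
    have hDSM : ∀ j k : ℕ, j + 1 ≤ k → StronglyMeasurable[F (k : ℤ)] (D j) := by
      intro j k hjk
      have h1 : F ((j + 1 : ℕ) : ℤ) ≤ F (k : ℤ) := hFmono (by exact_mod_cast hjk)
      have h2 : F ((j : ℕ) : ℤ) ≤ F (k : ℤ) := hFmono (by exact_mod_cast (by omega : j ≤ k))
      simp only [hD, hu]
      exact (stronglyMeasurable_condExp.mono h1).sub (stronglyMeasurable_condExp.mono h2)
    have hD0 : ∀ k : ℕ, μ[D k|F (k : ℤ)] =ᵐ[μ] 0 := by
      intro k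
      have hDeq : D k = u (k + 1) - u k := by
        funext x
        simp [hD]
      have h1 : μ[D k|F (k : ℤ)] =ᵐ[μ] μ[u (k + 1)|F (k : ℤ)] - μ[u k|F (k : ℤ)] := by
        rw [hDeq]
        exact condExp_sub (by exact integrable_condExp)
          (by exact integrable_condExp) _
      have h2 : μ[u (k + 1)|F (k : ℤ)] =ᵐ[μ] u k := by
        simp only [hu]
        exact condExp_condExp_of_le (hFmono (by exact_mod_cast Nat.le_succ k)) (hFle _)
      have h3 : μ[u k|F (k : ℤ)] = u k := by
        simp only [hu]
        exact condExp_of_stronglyMeasurable (hFle _) stronglyMeasurable_condExp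
          integrable_condExp
      filter_upwards [h1, h2] with x hx1 hx2
      simp only [hx1, Pi.sub_apply, hx2, h3, sub_self, Pi.zero_apply]
    have horth : ∀ j k : ℕ, j < k → ∫ x, D j x * D k x ∂μ = 0 := by
      intro j k hjk
      have hprod : Integrable (D j * D k) μ := by
        have := integrable_mul2 (hDmem j) (hDmem k)
        exact this
      have hpull : μ[D j * D k|F (k : ℤ)] =ᵐ[μ] D j * μ[D k|F (k : ℤ)] :=
        condExp_mul_of_stronglyMeasurable_left (hDSM j k hjk) hprod
          ((hDmem k).integrable one_le_two)
      have hzero : μ[D j * D k|F (k : ℤ)] =ᵐ[μ] 0 := by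
        filter_upwards [hpull, hD0 k] with x hx1 hx2
        simp [hx1, Pi.mul_apply, hx2]
      calc ∫ x, D j x * D k x ∂μ = ∫ x, (D j * D k) x ∂μ := rfl
        _ = ∫ x, (μ[D j * D k|F (k : ℤ)]) x ∂μ := (integral_condExp (hFle _)).symm
        _ = ∫ x, (0 : X → ℝ) x ∂μ := integral_congr_ae hzero
        _ = 0 := by simp
    have horth' : ∀ j k : ℕ, j ≠ k → ∫ x, D j x * D k x ∂μ = 0 := by
      intro j k hne
      rcases lt_or_gt_of_ne hne with h | h
      · exact horth j k h
      · have := horth k j h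
        rw [← this]
        congr 1
        funext x
        ring
    -- diagonal terms
    have hdiag : ∀ j : ℕ, j < n → ∫ x, D j x * D j x ∂μ = aa (n - j) := by
      intro j hj
      have h1 : ∫ x, D j x * D j x ∂μ
          = ∫ x, (Mf (n - j) (θ^[j + 1] x)) * (Mf (n - j) (θ^[j + 1] x)) ∂μ := by
        refine integral_congr_ae ?_
        filter_upwards [hT j hj] with x hx
        rw [hx]
      rw [h1]
      have h2 := (hθj (j + 1)).integral_comp (hembj (j + 1))
        (fun y => Mf (n - j) y * Mf (n - j) y)
      rw [h2, haa]
      simp [pow_two]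
    -- put everything together
    simp only [hSx]
    calc ∫ x, (S x - (μ[S|F 0]) x) ^ 2 ∂μ
        = ∫ x, (∑ j ∈ Finset.range n, D j x) * (∑ k ∈ Finset.range n, D k x) ∂μ := by
          refine integral_congr_ae (Filter.EventuallyEq.of_eq ?_)
          funext x
          rw [pow_two, show S x - (μ[S|F 0]) x = ∑ j ∈ Finset.range n, D j x from
            congrFun htel x]
      _ = ∫ x, ∑ j ∈ Finset.range n, ∑ k ∈ Finset.range n, D j x * D k x ∂μ := by
          refine integral_congr_ae (Filter.EventuallyEq.of_eq ?_)
          funext x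
          exact Finset.sum_mul_sum _ _ _ _
      _ = ∑ j ∈ Finset.range n, ∑ k ∈ Finset.range n, ∫ x, D j x * D k x ∂μ := by
          rw [integral_finset_sum _ fun j _ => integrable_finset_sum _
            fun k _ => integrable_mul2 (hDmem j) (hDmem k)]
          exact Finset.sum_congr rfl fun j _ =>
            integral_finset_sum _ fun k _ => integrable_mul2 (hDmem j) (hDmem k)
      _ = ∑ j ∈ Finset.range n, ∫ x, D j x * D j x ∂μ := by
          refine Finset.sum_congr rfl fun j hjmem => ?_
          refine Finset.sum_eq_single j (fun k _ hkj => horth' j k (Ne.symm hkj)) ?_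
          intro hj
          exact absurd hjmem hj
      _ = ∑ j ∈ Finset.range n, aa (n - j) := by
          refine Finset.sum_congr rfl fun j hj => hdiag j (Finset.mem_range.mp hj)
      _ = ∑ K ∈ Finset.range n, aa (K + 1) := by
          rw [← Finset.sum_range_reflect (fun t => aa (t + 1)) n]
          refine Finset.sum_congr rfl fun j hj => ?_
          have := Finset.mem_range.mp hj
          congr 1
          omega
  -- convergence of aa
  have haalim : Tendsto (fun K => aa (K + 1)) atTop (𝓝 (∫ x, m x ^ 2 ∂μ)) := by
    have hnorm : ∀ K, ‖hm.toLp m - (hMfmem K).toLp (Mf K)‖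
        = (eLpNorm (fun x => m x - Mf K x) 2 μ).toReal := by
      intro K
      rw [Lp.norm_def]
      congr 1
      apply eLpNorm_congr_ae
      filter_upwards [Lp.coeFn_sub (hm.toLp m) ((hMfmem K).toLp (Mf K)),
        hm.coeFn_toLp, (hMfmem K).coeFn_toLp] with x h1 h2 h3
      rw [h1, Pi.sub_apply, h2, h3]
    have hre : Tendsto (fun K => (eLpNorm (fun x => m x - Mf K x) 2 μ).toReal)
        atTop (𝓝 0) := by
      have hml : Tendsto (fun K : ℕ => eLpNorm (fun x => m x - Mf K x) 2 μ)
          atTop (𝓝 0) := by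
        simpa only [hMf, hgf] using hmlim
      have := (ENNReal.tendsto_toReal (by simp : (0 : ℝ≥0∞) ≠ ⊤)).comp hml
      simpa [Function.comp_def] using this
    have h0 : Tendsto (fun K => ‖hm.toLp m - (hMfmem K).toLp (Mf K)‖) atTop (𝓝 0) :=
      hre.congr fun K => (hnorm K).symm
    have hLp : Tendsto (fun K => (hMfmem K).toLp (Mf K)) atTop (𝓝 (hm.toLp m)) := by
      rw [tendsto_iff_norm_sub_tendsto_zero]
      exact h0.congr fun K => by rw [norm_sub_rev]
    have hms : Tendsto (fun K => ‖(hMfmem K).toLp (Mf K)‖ ^ 2) atTop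
        (𝓝 (‖hm.toLp m‖ ^ 2)) := hLp.norm.pow 2
    have hconv : Tendsto (fun K => aa K) atTop (𝓝 (∫ x, m x ^ 2 ∂μ)) := by
      rw [integral_sq_eq hm]
      refine hms.congr fun K => ?_
      rw [haa]
      exact (integral_sq_eq (hMfmem K)).symm
    exact hconv.comp (tendsto_add_atTop_nat 1)
  -- Cesàro
  have hces := haalim.cesaro
  refine hces.congr fun n => ?_
  rw [key n]
  rw [div_eq_inv_mul]
end

section
/- If f ∈ L^2 is ℱ_0-measurable and satisfies ∑_{n≥1} ‖E_0(f∘θ^n)‖_2 / √n < ∞, then f satisfies the Hannan condition ∑_{i≥0} ‖P_0(f∘θ^i)‖_2 < ∞. -/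
open MeasureTheory Filter Topology ENNReal

section helpers
variable {X : Type*} {m : MeasurableSpace X} [m0 : MeasurableSpace X] {μ : Measure X}


lemma aux_condexp_memℒp [IsFiniteMeasure μ] (hm : m ≤ m0)
    {g : X → ℝ} (hg : MemLp g 2 μ) :
    MemLp (μ[g|m]) 2 μ ∧ eLpNorm (μ[g|m]) 2 μ ≤ eLpNorm g 2 μ := by
  have hgi : Integrable g μ := hg.integrable one_le_two
  set G : Lp ℝ 2 μ := hg.toLp g with hG
  set c : Lp ℝ 2 μ := (condExpL2 ℝ ℝ hm G : Lp ℝ 2 μ) with hc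
  have hcoe : (G : X → ℝ) =ᵐ[μ] g := MemLp.coeFn_toLp hg
  have h1 : (c : X → ℝ) =ᵐ[μ] μ[g|m] := by
    refine ae_eq_condExp_of_forall_setIntegral_eq hm hgi (fun s hs hμs => ?_)
      (fun s hs hμs => ?_) ?_
    · exact ((Lp.memLp c).integrable one_le_two).integrableOn
    · have h2 := integral_condExpL2_eq (𝕜 := ℝ) hm G hs hμs.ne
      have h3 : (∫ x in s, (c : X → ℝ) x ∂μ) = ∫ x in s, (G : X → ℝ) x ∂μ := h2
      rw [h3]
      exact setIntegral_congr_ae (hm s hs) (hcoe.mono fun x hx _ => hx)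
    · exact aestronglyMeasurable_condExpL2 hm G
  constructor
  · exact (Lp.memLp _).ae_eq h1
  · calc eLpNorm (μ[g|m]) 2 μ = eLpNorm (c : X → ℝ) 2 μ := (eLpNorm_congr_ae h1).symm
      _ ≤ eLpNorm (G : X → ℝ) 2 μ := eLpNorm_condExpL2_le hm G
      _ = eLpNorm g 2 μ := eLpNorm_congr_ae hcoe

lemma aux_condexp_comp [IsFiniteMeasure μ] (hm : m ≤ m0)
    (e : X ≃ᵐ X) (he : MeasurePreserving e μ μ) (hmc : m.comap e ≤ m0)
    {g : X → ℝ} (hg : Integrable g μ) :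
    μ[g ∘ e|m.comap e] =ᵐ[μ] (μ[g|m]) ∘ e := by
  have hint : Integrable ((μ[g|m]) ∘ e) μ :=
    memLp_one_iff_integrable.mp
      ((memLp_one_iff_integrable.mpr integrable_condExp).comp_measurePreserving he)
  have hgi : Integrable (g ∘ e) μ :=
    memLp_one_iff_integrable.mp
      ((memLp_one_iff_integrable.mpr hg).comp_measurePreserving he)
  refine (ae_eq_condExp_of_forall_setIntegral_eq hmc hgi
    (fun s hs hμs => hint.integrableOn) (fun s hs hμs => ?_) ?_).symm
  · obtain ⟨t, ht, rfl⟩ := hs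
    have h1 : ∫ x in ⇑e ⁻¹' t, (μ[g|m]) (e x) ∂μ = ∫ y in t, (μ[g|m]) y ∂μ := by
      rw [← e.measurableEmbedding.setIntegral_map, he.map_eq]
    have h2 : ∫ x in ⇑e ⁻¹' t, g (e x) ∂μ = ∫ y in t, g y ∂μ := by
      rw [← e.measurableEmbedding.setIntegral_map, he.map_eq]
    calc ∫ x in ⇑e ⁻¹' t, ((μ[g|m]) ∘ e) x ∂μ = ∫ y in t, (μ[g|m]) y ∂μ := h1
      _ = ∫ y in t, g y ∂μ := setIntegral_condExp hm hg ht
      _ = ∫ x in ⇑e ⁻¹' t, (g ∘ e) x ∂μ := h2.symm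
  · have hme : @Measurable X X (m.comap e) m e := fun s hs => ⟨s, hs, rfl⟩
    exact (stronglyMeasurable_condExp.comp_measurable hme).aestronglyMeasurable

lemma aux_integral_mul_eq_zero [IsFiniteMeasure μ] (hm : m ≤ m0)
    {u v : X → ℝ} (hu : MemLp u 2 μ) (hv : MemLp v 2 μ)
    (hvm : AEStronglyMeasurable[m] v μ) (huc : μ[u|m] =ᵐ[μ] 0) :
    ∫ x, v x * u x ∂μ = 0 := by
  have hui : Integrable u μ := hu.integrable one_le_two
  have hprod : Integrable (v * u) μ := by
    have h12 : (1 : ℝ≥0∞) / 1 = 1 / 2 + 1 / 2 := by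
      norm_num [ENNReal.inv_two_add_inv_two]
    have := hu.smul (r := 1) hv
    rw [memLp_one_iff_integrable] at this
    simpa [smul_eq_mul, Pi.smul_def, Pi.mul_def] using this
  have h1 : μ[v * u|m] =ᵐ[μ] v * μ[u|m] := condExp_mul_of_aestronglyMeasurable_left hvm hprod hui
  have h2 : μ[v * u|m] =ᵐ[μ] 0 := by
    refine h1.trans ?_
    filter_upwards [huc] with x hx
    simp [hx]
  calc ∫ x, v x * u x ∂μ = ∫ x, (μ[v * u|m]) x ∂μ := (integral_condExp hm).symm
    _ = 0 := by rw [integral_congr_ae h2]; simp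

lemma aux_norm_sum_sq {H : Type*} [NormedAddCommGroup H] [InnerProductSpace ℝ H]
    (s : Finset ℕ) (w : ℕ → H)
    (h : ∀ i ∈ s, ∀ j ∈ s, i ≠ j → (inner ℝ (w i) (w j) : ℝ) = 0) :
    ‖∑ i ∈ s, w i‖ ^ 2 = ∑ i ∈ s, ‖w i‖ ^ 2 := by
  rw [← real_inner_self_eq_norm_sq, sum_inner]
  refine Finset.sum_congr rfl fun i hi => ?_
  rw [inner_sum, Finset.sum_eq_single_of_mem i hi (fun j hj hne => h i hi j hj (Ne.symm hne)),
    real_inner_self_eq_norm_sq]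

lemma aux_inner_toLp {u v : X → ℝ} (hu : MemLp u 2 μ) (hv : MemLp v 2 μ) :
    (inner ℝ (hu.toLp u) (hv.toLp v) : ℝ) = ∫ x, u x * v x ∂μ := by
  rw [L2.inner_def]
  refine integral_congr_ae ?_
  filter_upwards [hu.coeFn_toLp, hv.coeFn_toLp] with x hx hy
  simp [hx, hy, RCLike.inner_apply, mul_comm]

end helpers

/-- The condition `∑_{n≥1} ‖E_0(f∘θ^n)‖₂/√n < ∞` implies the Hannan condition
`∑_{i≥0} ‖P_0(f∘θ^i)‖₂ < ∞`. -/
theorem mw_implies_hannan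
    {X : Type*} [m0 : MeasurableSpace X] (μ : Measure X) [IsProbabilityMeasure μ]
    (θ θi : X → X) (hθ : MeasurePreserving θ μ μ) (hθi : MeasurePreserving θi μ μ)
    (hinv1 : Function.LeftInverse θi θ) (hinv2 : Function.RightInverse θi θ)
    (F : ℤ → MeasurableSpace X) (hFle : ∀ n, F n ≤ m0) (hFmono : Monotone F)
    (hFθ : ∀ n : ℤ, F (n + 1) = (F n).comap θ)
    (f : X → ℝ) (hf : MemLp f 2 μ) (hfmeas : StronglyMeasurable[F 0] f)
    (hMW : Summable (fun n : ℕ =>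
      (eLpNorm (μ[fun z => f (θ^[n + 1] z)|F 0]) 2 μ).toReal / Real.sqrt ((n : ℝ) + 1))) :
    Summable (fun i : ℕ =>
      (eLpNorm (μ[fun z => f (θ^[i] z)|F 0] - μ[fun z => f (θ^[i] z)|F (-1)]) 2 μ).toReal) := by
  classical
  set e : X ≃ᵐ X :=
    { toFun := θ, invFun := θi, left_inv := hinv1, right_inv := hinv2,
      measurable_toFun := hθ.measurable, measurable_invFun := hθi.measurable } with he_def
  have he : MeasurePreserving e μ μ := hθ
  set G : ℕ → X → ℝ := fun n z => f (θ^[n] z) with hGdef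
  have hG : ∀ n, MemLp (G n) 2 μ := fun n => hf.comp_measurePreserving (hθ.iterate n)
  have hGi : ∀ n, Integrable (G n) μ := fun n => (hG n).integrable one_le_two
  -- single-step shift
  have shift1 : ∀ (k : ℤ) (g : X → ℝ), Integrable g μ →
      μ[g ∘ θ|F (k + 1)] =ᵐ[μ] (μ[g|F k]) ∘ θ := by
    intro k g hg
    have hcoe : ⇑e = θ := rfl
    have hcomap : (F k).comap θ ≤ m0 := by rw [← hFθ k]; exact hFle _
    have h := aux_condexp_comp (hFle k) e he (by rw [hcoe]; exact hcomap) hg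
    rw [hcoe] at h
    rwa [hFθ k]
  -- iterated shift
  have shiftIter : ∀ (j : ℕ) (k : ℤ) (g : X → ℝ), Integrable g μ →
      μ[g ∘ θ^[j]|F k] =ᵐ[μ] (μ[g|F (k - j)]) ∘ θ^[j] := by
    intro j
    induction j with
    | zero => intro k g hg; simp
    | succ j ih =>
      intro k g hg
      have h1 : g ∘ θ^[j + 1] = (g ∘ θ^[j]) ∘ θ := by
        rw [Function.iterate_succ]; rfl
      have h2 : Integrable (g ∘ θ^[j]) μ :=
        memLp_one_iff_integrable.mp
          ((memLp_one_iff_integrable.mpr hg).comp_measurePreserving (hθ.iterate j))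
      have h3 : μ[(g ∘ θ^[j]) ∘ θ|F ((k - 1) + 1)] =ᵐ[μ] (μ[g ∘ θ^[j]|F (k - 1)]) ∘ θ :=
        shift1 (k - 1) _ h2
      have h4 : (μ[g ∘ θ^[j]|F (k - 1)]) ∘ θ =ᵐ[μ] ((μ[g|F (k - 1 - j)]) ∘ θ^[j]) ∘ θ :=
        hθ.quasiMeasurePreserving.ae_eq_comp (ih (k - 1) g hg)
      have h5 : ((μ[g|F (k - 1 - j)]) ∘ θ^[j]) ∘ θ = (μ[g|F (k - 1 + 1 - (j + 1 : ℕ))]) ∘ θ^[j + 1] := by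
        rw [Function.iterate_succ]
        have : k - 1 - (j : ℤ) = k - 1 + 1 - ((j + 1 : ℕ) : ℤ) := by push_cast; ring
        rw [this]
        rfl
      have h6 : ((k : ℤ) - 1) + 1 = k := by ring
      rw [h1, ← h6]
      exact h3.trans (h4.trans (Filter.EventuallyEq.of_eq h5))
  -- basic objects
  set A : ℕ → ℝ := fun i => (eLpNorm (μ[G i|F 0] - μ[G i|F (-1)]) 2 μ).toReal with hAdef
  set B : ℕ → ℝ := fun n => (eLpNorm (μ[G n|F 0]) 2 μ).toReal with hBdef
  have hVmem : ∀ (n : ℕ) (k : ℤ), MemLp (μ[G n|F k]) 2 μ :=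
    fun n k => (aux_condexp_memℒp (hFle k) (hG n)).1
  have hAnn : ∀ i, 0 ≤ A i := fun i => ENNReal.toReal_nonneg
  have hBnn : ∀ n, 0 ≤ B n := fun n => ENNReal.toReal_nonneg
  -- main inequality: sum of squares of martingale-difference norms bounded by ‖E_0(f∘θⁿ)‖²
  have hmain : ∀ n : ℕ, ∑ j ∈ Finset.range n, A (n + j) ^ 2 ≤ B n ^ 2 := by
    intro n
    set v : ℕ → X → ℝ := fun j => μ[G n|F (-(j : ℤ))] with hvdef
    have hvmem : ∀ j, MemLp (v j) 2 μ := fun j => hVmem n _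
    set w : ℕ → X → ℝ := fun j => if j < n then v j - v (j + 1) else v n with hwdef
    have hwmem : ∀ j, MemLp (w j) 2 μ := by
      intro j
      by_cases hj : j < n
      · simpa [hwdef, hj] using (hvmem j).sub (hvmem (j + 1))
      · simpa [hwdef, hj] using hvmem n
    set W : ℕ → Lp ℝ 2 μ := fun j => (hwmem j).toLp (w j) with hWdef
    -- telescoping sum
    have hsum : ∑ j ∈ Finset.range (n + 1), W j = (hvmem 0).toLp (v 0) := by
      rw [Finset.sum_range_succ]
      have h1 : ∀ j ∈ Finset.range n, W j = (hvmem j).toLp (v j) - (hvmem (j + 1)).toLp (v (j + 1)) := by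
        intro j hj
        have hj' : j < n := Finset.mem_range.mp hj
        have hwj : w j = v j - v (j + 1) := by simp [hwdef, hj']
        calc W j = ((hvmem j).sub (hvmem (j + 1))).toLp (v j - v (j + 1)) :=
              MemLp.toLp_congr _ _ (by rw [hwj])
          _ = (hvmem j).toLp (v j) - (hvmem (j + 1)).toLp (v (j + 1)) :=
              MemLp.toLp_sub _ _
      have h2 : W n = (hvmem n).toLp (v n) :=
        MemLp.toLp_congr _ _ (by simp [hwdef])
      rw [Finset.sum_congr rfl h1, h2,
        Finset.sum_range_sub' (fun j => (hvmem j).toLp (v j)), sub_add_cancel]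
    -- orthogonality
    have horth : ∀ i ∈ Finset.range (n + 1), ∀ k ∈ Finset.range (n + 1), i ≠ k →
        (inner ℝ (W i) (W k) : ℝ) = 0 := by
      have key : ∀ i k, i < k → k ≤ n → (inner ℝ (W i) (W k) : ℝ) = 0 := by
        intro i k hik hkn
        have hin : i < n := lt_of_lt_of_le hik hkn
        have hwi : w i = v i - v (i + 1) := by simp [hwdef, hin]
        -- W k is F(-k)-measurable
        have hWkm : AEStronglyMeasurable[F (-(k : ℤ))] (w k) μ := by
          by_cases hk : k < n
          · have hs1 : StronglyMeasurable[F (-(k : ℤ))] (v k) := stronglyMeasurable_condExp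
            have hs2 : StronglyMeasurable[F (-(k : ℤ))] (v (k + 1)) :=
              stronglyMeasurable_condExp.mono (hFmono (by push_cast; omega))
            have : w k = v k - v (k + 1) := by simp [hwdef, hk]
            rw [this]
            exact (hs1.sub hs2).aestronglyMeasurable
          · have hkeq : k = n := by omega
            have : w k = v n := by simp [hwdef, hk]
            rw [this, hkeq]
            exact (stronglyMeasurable_condExp :
              StronglyMeasurable[F (-(n : ℤ))] (v n)).aestronglyMeasurable
        -- E[w i | F(-k)] = 0
        have hcond : μ[w i|F (-(k : ℤ))] =ᵐ[μ] 0 := by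
          have hik1 : (-(k : ℤ)) ≤ -(i : ℤ) := by omega
          have hik2 : (-(k : ℤ)) ≤ -((i + 1 : ℕ) : ℤ) := by push_cast; omega
          have e1 : μ[v i|F (-(k : ℤ))] =ᵐ[μ] μ[G n|F (-(k : ℤ))] :=
            condExp_condExp_of_le (hFmono hik1) (hFle _)
          have e2 : μ[v (i + 1)|F (-(k : ℤ))] =ᵐ[μ] μ[G n|F (-(k : ℤ))] :=
            condExp_condExp_of_le (hFmono hik2) (hFle _)
          have e3 : μ[w i|F (-(k : ℤ))] =ᵐ[μ] μ[v i|F (-(k : ℤ))] - μ[v (i + 1)|F (-(k : ℤ))] := by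
            rw [hwi]
            exact condExp_sub integrable_condExp integrable_condExp _
          refine e3.trans ?_
          filter_upwards [e1, e2] with x h1x h2x
          simp [h1x, h2x]
        have hint := aux_integral_mul_eq_zero (hFle (-(k : ℤ))) (hwmem i) (hwmem k) hWkm hcond
        calc (inner ℝ (W i) (W k) : ℝ) = ∫ x, w i x * w k x ∂μ :=
              aux_inner_toLp (hwmem i) (hwmem k)
          _ = ∫ x, w k x * w i x ∂μ := by congr 1; ext x; ring
          _ = 0 := hint
      intro i hi k hk hik
      rcases lt_or_gt_of_ne hik with h | h
      · exact key i k h (by simpa using Nat.lt_succ_iff.mp (Finset.mem_range.mp hk))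
      · rw [real_inner_comm]
        exact key k i h (by simpa using Nat.lt_succ_iff.mp (Finset.mem_range.mp hi))
    -- Pythagoras
    have hpyth : ‖(hvmem 0).toLp (v 0)‖ ^ 2 = ∑ j ∈ Finset.range (n + 1), ‖W j‖ ^ 2 := by
      rw [← hsum]; exact aux_norm_sum_sq _ _ horth
    -- identify A (n + j) with ‖W j‖ for j < n
    have hA : ∀ j < n, A (n + j) = ‖W j‖ := by
      intro j hj
      have hGnj : G (n + j) = G n ∘ θ^[j] := by
        funext z; simp [hGdef, Function.iterate_add_apply]
      have hc0 : μ[G (n + j)|F 0] =ᵐ[μ] (v j) ∘ θ^[j] := by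
        have h := shiftIter j 0 (G n) (hGi n)
        rw [← hGnj] at h
        simpa [hvdef, zero_sub] using h
      have hc1 : μ[G (n + j)|F (-1)] =ᵐ[μ] (v (j + 1)) ∘ θ^[j] := by
        have h := shiftIter j (-1) (G n) (hGi n)
        rw [← hGnj] at h
        have hcast : (-1 : ℤ) - (j : ℤ) = -((j + 1 : ℕ) : ℤ) := by push_cast; ring
        rw [hcast] at h
        exact h
      have hdiff : μ[G (n + j)|F 0] - μ[G (n + j)|F (-1)] =ᵐ[μ] (v j - v (j + 1)) ∘ θ^[j] :=
        hc0.sub hc1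
      have hnorm : eLpNorm (μ[G (n + j)|F 0] - μ[G (n + j)|F (-1)]) 2 μ
          = eLpNorm (v j - v (j + 1)) 2 μ := by
        rw [eLpNorm_congr_ae hdiff]
        exact eLpNorm_comp_measurePreserving
          ((hvmem j).sub (hvmem (j + 1))).aestronglyMeasurable (hθ.iterate j)
      have hWj : W j = ((hvmem j).sub (hvmem (j + 1))).toLp (v j - v (j + 1)) :=
        MemLp.toLp_congr _ _ (by simp [hwdef, hj])
      rw [hAdef]
      simp only []
      rw [hnorm, hWj, Lp.norm_toLp]
    calc ∑ j ∈ Finset.range n, A (n + j) ^ 2 = ∑ j ∈ Finset.range n, ‖W j‖ ^ 2 :=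
          Finset.sum_congr rfl fun j hj => by rw [hA j (Finset.mem_range.mp hj)]
      _ ≤ ∑ j ∈ Finset.range (n + 1), ‖W j‖ ^ 2 :=
          Finset.sum_le_sum_of_subset_of_nonneg
            (Finset.range_subset_range.mpr (Nat.le_succ n)) (fun _ _ _ => sq_nonneg _)
      _ = ‖(hvmem 0).toLp (v 0)‖ ^ 2 := hpyth.symm
      _ = B n ^ 2 := by
          rw [Lp.norm_toLp]
          have hv0 : v 0 = μ[G n|F 0] := by simp [hvdef]
          rw [hBdef]
          simp only []
          rw [hv0]
  -- monotonicity of B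
  have hBmono : ∀ n, B (n + 1) ≤ B n := by
    intro n
    have hcomp : G (n + 1) = G n ∘ θ := by
      funext z; simp [hGdef, Function.iterate_succ_apply]
    have h1 : μ[G (n + 1)|F 1] =ᵐ[μ] (μ[G n|F 0]) ∘ θ := by
      have h := shift1 0 (G n) (hGi n)
      rw [zero_add] at h
      rw [hcomp]
      exact h
    have h2 : eLpNorm (μ[G (n + 1)|F 1]) 2 μ = eLpNorm (μ[G n|F 0]) 2 μ := by
      rw [eLpNorm_congr_ae h1]
      exact eLpNorm_comp_measurePreserving (hVmem n 0).aestronglyMeasurable hθ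
    have h3 : μ[μ[G (n + 1)|F 1]|F 0] =ᵐ[μ] μ[G (n + 1)|F 0] :=
      condExp_condExp_of_le (hFmono (by norm_num)) (hFle 1)
    have h4 : eLpNorm (μ[G (n + 1)|F 0]) 2 μ ≤ eLpNorm (μ[G (n + 1)|F 1]) 2 μ := by
      rw [← eLpNorm_congr_ae h3]
      exact (aux_condexp_memℒp (hFle 0) (hVmem (n + 1) 1)).2
    exact ENNReal.toReal_mono (hVmem n 0).eLpNorm_ne_top (h4.trans h2.le)
  have hBanti : Antitone B := antitone_nat_of_succ_le hBmono
  -- Cauchy-Schwarz on blocks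
  have hCS : ∀ n : ℕ, ∑ j ∈ Finset.range n, A (n + j) ≤ Real.sqrt n * B n := by
    intro n
    have h1 : (∑ j ∈ Finset.range n, A (n + j)) ^ 2
        ≤ (n : ℝ) * ∑ j ∈ Finset.range n, A (n + j) ^ 2 := by
      have := Finset.sum_mul_sq_le_sq_mul_sq (Finset.range n)
        (fun _ => (1 : ℝ)) (fun j => A (n + j))
      simpa using this
    have h2 : (∑ j ∈ Finset.range n, A (n + j)) ^ 2 ≤ (n : ℝ) * B n ^ 2 :=
      h1.trans (by
        have := hmain n
        nlinarith [Nat.cast_nonneg (α := ℝ) n])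
    have h3 : ∑ j ∈ Finset.range n, A (n + j) ≤ Real.sqrt ((n : ℝ) * B n ^ 2) :=
      Real.le_sqrt_of_sq_le h2
    rwa [Real.sqrt_mul (Nat.cast_nonneg n), Real.sqrt_sq (hBnn n)] at h3
  -- the Maxwell--Woodroofe summand
  set D : ℕ → ℝ := fun n => B (n + 1) / Real.sqrt ((n : ℝ) + 1) with hDdef
  have hMW' : Summable D := hMW
  have hDnn : ∀ n, 0 ≤ D n := fun n => div_nonneg (hBnn _) (Real.sqrt_nonneg _)
  set T : ℝ := ∑' n, D n with hTdef
  have hT : ∀ s : Finset ℕ, ∑ n ∈ s, D n ≤ T := fun s =>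
    Summable.sum_le_tsum s (fun i _ => hDnn i) hMW'
  -- dyadic block bound for A
  have hblockA : ∀ m : ℕ, ∑ k ∈ Finset.Ico (2 ^ m) (2 ^ (m + 1)), A k
      ≤ Real.sqrt ((2 ^ m : ℕ) : ℝ) * B (2 ^ m) := by
    intro m
    rw [Finset.sum_Ico_eq_sum_range]
    have hcard : 2 ^ (m + 1) - 2 ^ m = 2 ^ m := by
      have : 2 ^ (m + 1) = 2 * 2 ^ m := by ring
      omega
    rw [hcard]
    exact hCS (2 ^ m)
  -- dyadic block bound for D
  have hblockD : ∀ m : ℕ, Real.sqrt ((2 ^ (m + 1) : ℕ) : ℝ) * B (2 ^ (m + 1))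
      ≤ 2 * ∑ n ∈ Finset.Ico (2 ^ m) (2 ^ (m + 1)), D n := by
    intro m
    set s : ℝ := ((2 ^ (m + 1) : ℕ) : ℝ) with hsdef
    have hspos : 0 < s := by positivity
    have hsqpos : 0 < Real.sqrt s := Real.sqrt_pos.mpr hspos
    set c : ℝ := B (2 ^ (m + 1)) with hcdef
    have hterm : ∀ n ∈ Finset.Ico (2 ^ m) (2 ^ (m + 1)), c / Real.sqrt s ≤ D n := by
      intro n hn
      obtain ⟨hn1, hn2⟩ := Finset.mem_Ico.mp hn
      have hBle : c ≤ B (n + 1) := hBanti (by omega)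
      have hsle : Real.sqrt ((n : ℝ) + 1) ≤ Real.sqrt s := by
        apply Real.sqrt_le_sqrt
        rw [hsdef]
        push_cast
        have : n + 1 ≤ 2 ^ (m + 1) := by omega
        exact_mod_cast this
      have hpos' : 0 < Real.sqrt ((n : ℝ) + 1) :=
        Real.sqrt_pos.mpr (by positivity)
      exact div_le_div₀ (le_trans (hBnn _) hBle |> fun _ => hBnn (n+1)) hBle hpos' hsle
    have hsum1 : (Finset.Ico (2 ^ m) (2 ^ (m + 1))).card • (c / Real.sqrt s)
        ≤ ∑ n ∈ Finset.Ico (2 ^ m) (2 ^ (m + 1)), D n :=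
      Finset.card_nsmul_le_sum _ _ _ hterm
    have hcard : (Finset.Ico (2 ^ m) (2 ^ (m + 1))).card = 2 ^ m := by
      rw [Nat.card_Ico]
      have : 2 ^ (m + 1) = 2 * 2 ^ m := by ring
      omega
    rw [hcard, nsmul_eq_mul] at hsum1
    have hkey : Real.sqrt s * c ≤ 2 * ((2 ^ m : ℕ) * (c / Real.sqrt s)) := by
      have h2m : 2 * ((2 ^ m : ℕ) : ℝ) = s := by rw [hsdef]; push_cast; ring
      have hss : Real.sqrt s * Real.sqrt s = s := Real.mul_self_sqrt hspos.le
      rw [← mul_assoc, h2m]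
      rw [show s * (c / Real.sqrt s) = Real.sqrt s * c by
        nth_rewrite 1 [← hss]
        rw [mul_assoc, mul_comm (Real.sqrt s) (c / Real.sqrt s),
          div_mul_cancel₀ c hsqpos.ne']]
    calc Real.sqrt s * c ≤ 2 * ((2 ^ m : ℕ) * (c / Real.sqrt s)) := hkey
      _ ≤ 2 * ∑ n ∈ Finset.Ico (2 ^ m) (2 ^ (m + 1)), D n := by
          have := hsum1
          nlinarith [hsum1]
  -- dyadic induction
  have hP : ∀ M : ℕ, ∑ k ∈ Finset.Ico 1 (2 ^ (M + 1)), A k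
      ≤ B 1 + 2 * ∑ n ∈ Finset.Ico 1 (2 ^ M), D n := by
    intro M
    induction M with
    | zero =>
      have h0 := hblockA 0
      norm_num [Real.sqrt_one] at h0 ⊢
      exact h0
    | succ M ih =>
      show ∑ k ∈ Finset.Ico 1 (2 ^ (M + 2)), A k
        ≤ B 1 + 2 * ∑ n ∈ Finset.Ico 1 (2 ^ (M + 1)), D n
      have hsplit : ∑ k ∈ Finset.Ico 1 (2 ^ (M + 1)), A k
          + ∑ k ∈ Finset.Ico (2 ^ (M + 1)) (2 ^ (M + 2)), A k
          = ∑ k ∈ Finset.Ico 1 (2 ^ (M + 2)), A k :=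
        Finset.sum_Ico_consecutive _ (Nat.one_le_pow _ _ (by norm_num))
          (Nat.pow_le_pow_right (by norm_num) (by omega))
      have hsplitD : ∑ n ∈ Finset.Ico 1 (2 ^ M), D n
          + ∑ n ∈ Finset.Ico (2 ^ M) (2 ^ (M + 1)), D n
          = ∑ n ∈ Finset.Ico 1 (2 ^ (M + 1)), D n :=
        Finset.sum_Ico_consecutive _ (Nat.one_le_pow _ _ (by norm_num))
          (Nat.pow_le_pow_right (by norm_num) (by omega))
      have h1 : ∑ k ∈ Finset.Ico (2 ^ (M + 1)) (2 ^ (M + 2)), A k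
          ≤ 2 * ∑ n ∈ Finset.Ico (2 ^ M) (2 ^ (M + 1)), D n :=
        (hblockA (M + 1)).trans (hblockD M)
      linarith
  -- conclusion
  have hbound : ∀ N : ℕ, ∑ i ∈ Finset.range N, A i ≤ A 0 + B 1 + 2 * T := by
    intro N
    have hsub : Finset.range N ⊆ Finset.range (2 ^ (N + 1)) :=
      Finset.range_subset_range.mpr (le_of_lt (lt_of_lt_of_le (Nat.lt_two_pow_self (n := N))
        (Nat.pow_le_pow_right (by norm_num) (Nat.le_succ N))))
    have h1 : ∑ i ∈ Finset.range N, A i ≤ ∑ i ∈ Finset.range (2 ^ (N + 1)), A i :=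
      Finset.sum_le_sum_of_subset_of_nonneg hsub (fun i _ _ => hAnn i)
    have h2 : ∑ i ∈ Finset.range (2 ^ (N + 1)), A i
        = A 0 + ∑ i ∈ Finset.Ico 1 (2 ^ (N + 1)), A i := by
      rw [Finset.range_eq_Ico, Finset.sum_eq_sum_Ico_succ_bot (Nat.one_le_pow _ _ (by norm_num))]
    have h3 := hP N
    have h4 := hT (Finset.Ico 1 (2 ^ N))
    linarith
  exact summable_of_sum_range_le hAnn hbound
end

section
/- Let (X,𝒜) be a Polish space with its Borel σ-algebra, μ a probability on 𝒜, θ an invertible bimeasurable μ-preserving transformation, and ℱ ⊂ 𝒜 a σ-algebra with ℱ ⊂ θ^{-1}ℱ. Define W_n(x) = θ^n(x) for n ∈ ℤ. Then (W_n)_{n∈ℤ}, viewed as taking values in (X,ℱ), is a stationary homogeneous Markov chain with transition operator Qh = E(h∘θ|ℱ) and stationary distribution μ; in particular, for every ℱ-measurable f ∈ L^2, the stationary process (f∘θ^n)_n is a functional of a stationary Markov chain. -/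
open MeasureTheory Filter Topology ENNReal

private lemma integrable_of_bdd {X : Type*} [MeasurableSpace X] {μ : Measure X}
    [IsFiniteMeasure μ] {f : X → ℝ} {B : ℝ} (hf : AEStronglyMeasurable f μ)
    (hB : ∀ x, |f x| ≤ B) : Integrable f μ := by
  exact (MemLp.of_bound hf B (ae_of_all _ fun x => by
    simpa [Real.norm_eq_abs] using hB x)).integrable le_rfl

/-- On a Polish space, `W_n = θ^n` is a stationary homogeneous Markov chain with state
space `(X, ℱ)` and transition operator `Q h = E(h∘θ|ℱ)`: `Q` preserves `μ` and the Markov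
property `∫ φ_0(W_0)⋯φ_n(W_n) dμ = ∫ φ_0(W_0)⋯φ_{n-1}(W_{n-1})·(Qφ_n)(W_{n-1}) dμ` holds
for all bounded `ℱ`-measurable `φ_k`. In particular any `ℱ`-measurable `f ∈ L²` yields a
process `(f∘θ^n)` which is a functional of a stationary Markov chain. -/
theorem markov_chain_representation
    {X : Type*} [TopologicalSpace X] [PolishSpace X]
    [m0 : MeasurableSpace X] [BorelSpace X]
    (μ : Measure X) [IsProbabilityMeasure μ]
    (θ θi : X → X) (hθ : MeasurePreserving θ μ μ) (hθi : MeasurePreserving θi μ μ)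
    (hinv1 : Function.LeftInverse θi θ) (hinv2 : Function.RightInverse θi θ)
    (F : MeasurableSpace X) (hFle : F ≤ m0) (hFsub : F ≤ F.comap θ) :
    (∀ h : X → ℝ, Integrable h μ →
      ∫ x, (μ[fun y => h (θ y)|F]) x ∂μ = ∫ x, h x ∂μ) ∧
    (∀ n : ℕ, 1 ≤ n → ∀ φ : ℕ → X → ℝ,
      (∀ k, StronglyMeasurable[F] (φ k)) → (∀ k, ∃ B : ℝ, ∀ x, |φ k x| ≤ B) →
      ∫ x, ∏ k ∈ Finset.range (n + 1), φ k (θ^[k] x) ∂μ =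
        ∫ x, (∏ k ∈ Finset.range n, φ k (θ^[k] x)) *
          (μ[fun y => φ n (θ y)|F]) (θ^[n - 1] x) ∂μ) := by
  letI : MeasurableSpace X := m0
  -- change of variables along iterates of θ
  have comp_int : ∀ (m : ℕ) (f : X → ℝ), AEStronglyMeasurable f μ →
      ∫ x, f (θ^[m] x) ∂μ = ∫ x, f x ∂μ := by
    intro m f hf
    have hmp : MeasurePreserving (θ^[m]) μ μ := hθ.iterate m
    have hf' : AEStronglyMeasurable f (μ.map (θ^[m])) := by rw [hmp.map_eq]; exact hf
    rw [← integral_map hmp.measurable.aemeasurable hf', hmp.map_eq]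
  -- θi is F-measurable
  have hθiF : @Measurable X X F F θi := by
    intro A hA
    obtain ⟨B, hB, rfl⟩ := hFsub _ hA
    have : θi ⁻¹' (θ ⁻¹' B) = B := by
      ext x; simp [Set.mem_preimage, hinv2 x]
    rwa [this]
  constructor
  · intro h hh
    have hcomp : Integrable (fun y => h (θ y)) μ := by
      have := (hθ.integrable_comp_emb ?emb).mpr hh
      · exact this
      case emb =>
        exact (MeasurableEquiv.mk ⟨θ, θi, hinv1, hinv2⟩ hθ.measurable
          hθi.measurable).measurableEmbedding
    rw [integral_condExp hFle]
    exact comp_int 1 h hh.aestronglyMeasurable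
  · intro n hn φ hφm hφb
    obtain ⟨m, rfl⟩ : ∃ m, n = m + 1 := ⟨n - 1, by omega⟩
    simp only [Nat.add_sub_cancel]
    choose B hB using hφb
    have hXne : Nonempty X := by
      by_contra hX
      have : (Set.univ : Set X) = ∅ := by
        simp [Set.eq_empty_iff_forall_notMem, not_nonempty_iff.mp hX]
      have h1 : μ Set.univ = 1 := measure_univ
      rw [this] at h1; simp at h1
    have hBnn : ∀ k, 0 ≤ B k :=
      fun k => le_trans (abs_nonneg _) (hB k (Classical.arbitrary X))
    -- G : the product pulled back by θi
    set G : X → ℝ := fun y => ∏ k ∈ Finset.range (m + 1), φ k (θi^[m - k] y) with hGdef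
    have hgG : ∀ x, (∏ k ∈ Finset.range (m + 1), φ k (θ^[k] x)) = G (θ^[m] x) := by
      intro x
      apply Finset.prod_congr rfl
      intro k hk
      have hkm : k ≤ m := by simpa using Nat.lt_succ_iff.mp (Finset.mem_range.mp hk)
      have h1 : θ^[m] x = θ^[m - k] (θ^[k] x) := by
        rw [← Function.iterate_add_apply]
        congr 1; omega
      rw [h1, (hinv1.iterate (m - k)) (θ^[k] x)]
    -- measurability of G
    have hGF : StronglyMeasurable[F] G := by
      apply Finset.stronglyMeasurable_fun_prod
      intro k _
      exact (hφm k).comp_measurable (hθiF.iterate (m - k))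
    have hGsm : AEStronglyMeasurable G μ := (hGF.mono hFle).aestronglyMeasurable
    have hGbd : ∀ y, |G y| ≤ ∏ k ∈ Finset.range (m + 1), B k := by
      intro y
      rw [hGdef]
      calc |∏ k ∈ Finset.range (m + 1), φ k (θi^[m - k] y)|
          = ∏ k ∈ Finset.range (m + 1), |φ k (θi^[m - k] y)| := Finset.abs_prod _ _
        _ ≤ ∏ k ∈ Finset.range (m + 1), B k :=
            Finset.prod_le_prod (fun k _ => abs_nonneg _) (fun k _ => hB k _)
    have hGint : Integrable G μ := integrable_of_bdd hGsm hGbd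
    set f : X → ℝ := fun y => φ (m + 1) (θ y) with hfdef
    have hfsm : AEStronglyMeasurable f μ :=
      (((hφm (m + 1)).mono hFle).comp_measurable hθ.measurable).aestronglyMeasurable
    have hfint : Integrable f μ := integrable_of_bdd hfsm (fun x => hB (m + 1) (θ x))
    have hGfint : Integrable (G * f) μ := by
      apply integrable_of_bdd (hGsm.mul hfsm)
        (B := (∏ k ∈ Finset.range (m + 1), B k) * B (m + 1))
      intro x
      rw [Pi.mul_apply, abs_mul]
      exact mul_le_mul (hGbd x) (hB (m + 1) (θ x)) (abs_nonneg _)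
        (Finset.prod_nonneg fun k _ => hBnn k)
    -- key conditional expectation step
    have hce : μ[G * f|F] =ᵐ[μ] G * μ[f|F] :=
      condExp_mul_of_stronglyMeasurable_left hGF hGfint hfint
    have hψsm : AEStronglyMeasurable (μ[f|F]) μ :=
      (stronglyMeasurable_condExp.mono hFle).aestronglyMeasurable
    calc ∫ x, ∏ k ∈ Finset.range (m + 1 + 1), φ k (θ^[k] x) ∂μ
        = ∫ x, (fun y => G y * f y) (θ^[m] x) ∂μ := by
          apply integral_congr_ae (ae_of_all _ fun x => ?_)
          rw [Finset.prod_range_succ, hgG x]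
          congr 1
          rw [hfdef]
          simp only []
          congr 1
          rw [← Function.iterate_succ_apply' θ m x]
      _ = ∫ x, G x * f x ∂μ := comp_int m _ (hGsm.mul hfsm)
      _ = ∫ x, (G * f) x ∂μ := rfl
      _ = ∫ x, (μ[G * f|F]) x ∂μ := (integral_condExp hFle).symm
      _ = ∫ x, G x * (μ[f|F]) x ∂μ := integral_congr_ae hce
      _ = ∫ x, (fun y => G y * (μ[f|F]) y) (θ^[m] x) ∂μ :=
          (comp_int m _ (hGsm.mul hψsm)).symm
      _ = ∫ x, (∏ k ∈ Finset.range (m + 1), φ k (θ^[k] x)) *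
            (μ[fun y => φ (m + 1) (θ y)|F]) (θ^[m] x) ∂μ := by
          apply integral_congr_ae (ae_of_all _ fun x => ?_)
          simp only [hgG x]
          rfl
end
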